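/- For every integer k ≥ 2, the quantity k⁴ - (5/2)k² + 9/16 is strictly positive; consequently, for an H² function u on S¹ with vanishing first Fourier mode, ∫₀^{2π}(u_{θθ}² - (5/2)u_θ² + (9/16)u²)dθ ≥ C ∫₀^{2π}(u_{θθ}² + u²)dθ for some absolute constant C > 0. -/

import Mathlib

open Real intervalIntegral

open MeasureTheory AddCircle Set
open scoped ENNReal

noncomputable section

local instance fact2pi : Fact ((0:ℝ) < 2 * π) := ⟨by positivity⟩

/-- Parseval for a continuous 2π-periodic real function. -/
lemma parseval_aux (v : ℝ → ℝ) (hv : Continuous v) (hper : Function.Periodic v (2 * π)) :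
    Summable (fun n : ℤ => ‖fourierCoeff (liftIco (2*π) 0 (fun x => (v x : ℂ))) n‖ ^ 2) ∧
    (∑' n : ℤ, ‖fourierCoeff (liftIco (2*π) 0 (fun x => (v x : ℂ))) n‖ ^ 2)
      = (2*π)⁻¹ * ∫ x in (0:ℝ)..(2*π), (v x)^2 := by
  set V : ℝ → ℂ := fun x => (v x : ℂ) with hV
  have hVc : Continuous V := Complex.continuous_ofReal.comp hv
  have hVp : V 0 = V (2*π) := by simp [hV, (hper 0).symm, zero_add]
  set f₁ : C(AddCircle (2*π), ℂ) :=
    ⟨liftIco (2*π) 0 V, liftIco_zero_continuous hVp hVc.continuousOn⟩ with hf₁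
  set F₁ := ContinuousMap.toLp (E := ℂ) 2 haarAddCircle ℂ f₁ with hF₁
  have hcoeff : ∀ n : ℤ, fourierCoeff (F₁ : AddCircle (2*π) → ℂ) n
      = fourierCoeff (liftIco (2*π) 0 V) n := by
    intro n
    rw [fourierCoeff_toLp]
    rfl
  constructor
  · have hmem := lp.memℓp (fourierBasis.repr F₁)
    have hsum := hmem.summable (p := (2 : ℝ≥0∞)) (by norm_num)
    simp_rw [fourierBasis_repr] at hsum
    refine hsum.congr fun n => ?_
    rw [(by norm_num : ENNReal.toReal 2 = ((2:ℕ):ℝ)), Real.rpow_natCast, hcoeff]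
  · have hP := tsum_sq_fourierCoeff F₁
    simp_rw [hcoeff] at hP
    have hae : (F₁ : AddCircle (2*π) → ℂ) =ᵐ[haarAddCircle] f₁ :=
      ContinuousMap.coeFn_toLp (p := 2) (𝕜 := ℂ) (μ := haarAddCircle) f₁
    have h1 : ∫ t : AddCircle (2*π), ‖F₁ t‖^2 ∂haarAddCircle
        = ∫ t : AddCircle (2*π), ‖f₁ t‖^2 ∂haarAddCircle := by
      refine integral_congr_ae ?_
      filter_upwards [hae] with t ht using by rw [ht]
    have h2 : ∫ t : AddCircle (2*π), ‖f₁ t‖^2 ∂(volume)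
        = (2*π) * ∫ t : AddCircle (2*π), ‖f₁ t‖^2 ∂haarAddCircle := by
      rw [volume_eq_smul_haarAddCircle, MeasureTheory.integral_smul_measure, smul_eq_mul,
        ENNReal.toReal_ofReal (by positivity)]
    have h3 : ∫ x in (0:ℝ)..(2*π), ‖f₁ (x : AddCircle (2*π))‖^2
        = ∫ t : AddCircle (2*π), ‖f₁ t‖^2 ∂(volume) := by
      simpa using AddCircle.intervalIntegral_preimage (2*π) 0
        (fun t : AddCircle (2*π) => ‖f₁ t‖^2)
    have h4 : ∫ x in (0:ℝ)..(2*π), ‖f₁ (x : AddCircle (2*π))‖^2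
        = ∫ x in (0:ℝ)..(2*π), (v x)^2 := by
      rw [intervalIntegral.integral_of_le (by positivity),
        intervalIntegral.integral_of_le (by positivity),
        integral_Ioc_eq_integral_Ioo, integral_Ioc_eq_integral_Ioo]
      refine setIntegral_congr_fun measurableSet_Ioo fun x hx => ?_
      have hx' : x ∈ Ico (0:ℝ) (0 + 2*π) := ⟨le_of_lt hx.1, by simpa using hx.2⟩
      have hfx : f₁ (x : AddCircle (2*π)) = V x := by
        show liftIco (2*π) 0 V (x : AddCircle (2*π)) = V x
        exact liftIco_coe_apply hx'
      rw [hfx, hV]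
      simp [sq_abs]
    rw [hP, h1]
    rw [← h4, h3, h2]
    field_simp

lemma coeff_eq (v : ℝ → ℝ) (hv : Continuous v) (n : ℤ) :
    fourierCoeff (liftIco (2*π) 0 (fun x => (v x : ℂ))) n
      = ((2*π)⁻¹ : ℂ) * (((∫ x in (0:ℝ)..(2*π), v x * cos (n*x) : ℝ) : ℂ)
          - ((∫ x in (0:ℝ)..(2*π), v x * sin (n*x) : ℝ) : ℂ) * Complex.I) := by
  rw [fourierCoeff_liftIco_eq, fourierCoeffOn_eq_integral]
  have hfour : ∀ x : ℝ, (fourier (-n) (x : AddCircle (0 + 2*π - 0)) : ℂ)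
      = ((cos (n*x) : ℝ) : ℂ) - ((sin (n*x) : ℝ) : ℂ) * Complex.I := by
    intro x
    rw [fourier_coe_apply]
    have h : 2 * ↑π * Complex.I * (↑(-n) : ℂ) * (↑x : ℂ) / ((0 + 2*π - 0 : ℝ) : ℂ) = ((-(n*x) : ℝ) : ℂ) * Complex.I := by
      push_cast
      field_simp [Real.pi_ne_zero]
      ring
    rw [h, Complex.exp_mul_I]
    push_cast
    simp [Real.cos_neg, Real.sin_neg]
    ring
  simp_rw [smul_eq_mul, hfour]
  have hsplit : ∀ x : ℝ, (((cos (n*x) : ℝ) : ℂ) - ((sin (n*x) : ℝ) : ℂ) * Complex.I) * ((v x : ℝ) : ℂ)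
      = ((v x * cos (n*x) : ℝ) : ℂ) - ((v x * sin (n*x) : ℝ) : ℂ) * Complex.I := by
    intro x; push_cast; ring
  simp_rw [hsplit]
  have i1 : IntervalIntegrable (fun x : ℝ => ((v x * cos (n*x) : ℝ) : ℂ)) volume 0 (0+2*π) :=
    (Complex.continuous_ofReal.comp (hv.mul (Real.continuous_cos.comp (by continuity)))).intervalIntegrable _ _
  have i2 : IntervalIntegrable (fun x : ℝ => ((v x * sin (n*x) : ℝ) : ℂ) * Complex.I) volume 0 (0+2*π) :=
    ((Complex.continuous_ofReal.comp (hv.mul (Real.continuous_sin.comp (by continuity)))).mul continuous_const).intervalIntegrable _ _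
  rw [intervalIntegral.integral_sub i1 i2, intervalIntegral.integral_mul_const,
    intervalIntegral.integral_ofReal, intervalIntegral.integral_ofReal]
  rw [zero_add, sub_zero]
  norm_num

lemma deriv_coeff (f f' : ℝ → ℝ) (hf : ∀ x, HasDerivAt f (f' x) x)
    (hf'c : Continuous f') (hper : f 0 = f (2*π)) (n : ℤ) :
    fourierCoeff (liftIco (2*π) 0 (fun x => (f' x : ℂ))) n
      = Complex.I * n * fourierCoeff (liftIco (2*π) 0 (fun x => (f x : ℂ))) n := by
  rcases eq_or_ne n 0 with rfl | hn
  · -- n = 0 : coefficient of f' is (1/2π)∫ f' = 0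
    rw [coeff_eq f' hf'c 0]
    have h0 : (∫ x in (0:ℝ)..(2*π), f' x * cos ((0:ℤ)*x)) = f (2*π) - f 0 := by
      simp only [Int.cast_zero, zero_mul, Real.cos_zero, mul_one]
      exact intervalIntegral.integral_eq_sub_of_hasDerivAt (fun x _ => hf x)
        (hf'c.intervalIntegrable _ _)
    rw [h0, ← hper]
    simp
  · have hab : (0:ℝ) < 0 + 2*π := by rw [zero_add]; positivity
    have key := fourierCoeffOn_of_hasDerivAt hab hn
      (f := fun x => (f x : ℂ)) (f' := fun x => (f' x : ℂ))
      (fun x _ => (hf x).ofReal_comp)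
      ((Complex.continuous_ofReal.comp hf'c).intervalIntegrable _ _)
    rw [fourierCoeff_liftIco_eq, fourierCoeff_liftIco_eq]
    have hz : ((f (0 + 2*π) : ℂ)) - ((f 0 : ℂ)) = 0 := by
      rw [zero_add, ← hper]; ring
    rw [hz, mul_zero, zero_sub] at key
    have hπ : ((π : ℝ) : ℂ) ≠ 0 := Complex.ofReal_ne_zero.mpr Real.pi_ne_zero
    have hnz : (n : ℂ) ≠ 0 := Int.cast_ne_zero.mpr hn
    have h2 : ((0 + 2*π : ℝ) : ℂ) - ((0:ℝ) : ℂ) = 2 * (π : ℂ) := by push_cast; ring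
    rw [h2] at key
    rw [key]
    field_simp [Complex.I_ne_zero]

lemma periodic_deriv (f : ℝ → ℝ) (hf : Function.Periodic f (2*π)) :
    Function.Periodic (deriv f) (2*π) := by
  intro x
  have h1 : deriv (fun y => f (y + 2*π)) x = deriv f (x + 2*π) :=
    deriv_comp_add_const f (2*π) x
  rw [← h1]
  congr 1
  ext y
  exact hf y

lemma key_ineq (u : ℝ → ℝ) (hu : ContDiff ℝ 2 u)
    (hper : Function.Periodic u (2 * π))
    (hc : (∫ θ in (0:ℝ)..(2 * π), u θ * cos θ) = 0)
    (hs : (∫ θ in (0:ℝ)..(2 * π), u θ * sin θ) = 0) :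
    4 * ∫ θ in (0:ℝ)..(2 * π), (deriv u θ)^2
      ≤ ∫ θ in (0:ℝ)..(2 * π), (deriv (deriv u) θ)^2 := by
  set v := deriv u with hv
  set w := deriv v with hw
  have hu' : ContDiff ℝ (1+1) u := by norm_num; exact hu
  have hu1 : ContDiff ℝ 1 v := (contDiff_succ_iff_deriv.mp hu').2.2
  have hv_c : Continuous v := hu1.continuous
  have hu1' : ContDiff ℝ (0+1) v := by norm_num; exact hu1
  have hw_c : Continuous w := (contDiff_succ_iff_deriv.mp hu1').2.2.continuous
  have hud : ∀ x, HasDerivAt u (v x) x :=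
    fun x => (hu.differentiable (by norm_num)).differentiableAt.hasDerivAt
  have hvd : ∀ x, HasDerivAt v (w x) x :=
    fun x => (hu1.differentiable (by norm_num)).differentiableAt.hasDerivAt
  have hv_per : Function.Periodic v (2*π) := by
    intro x
    have h1 : deriv (fun y => u (y + 2*π)) x = deriv u (x + 2*π) :=
      deriv_comp_add_const u (2*π) x
    rw [hv, ← h1]
    congr 1
    ext y
    exact hper y
  have hu02 : u 0 = u (2*π) := by simpa using (hper 0).symm
  have hv02 : v 0 = v (2*π) := by simpa using (hv_per 0).symm
  -- ∫ v = 0, ∫ v cos = 0, ∫ v sin = 0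
  have hintv : (∫ x in (0:ℝ)..(2*π), v x) = 0 := by
    rw [intervalIntegral.integral_eq_sub_of_hasDerivAt (fun x _ => hud x)
      (hv_c.intervalIntegrable _ _), ← hu02, sub_self]
  have hparts1 : (∫ x in (0:ℝ)..(2*π), (v x * sin x + u x * cos x)) = 0 := by
    rw [intervalIntegral.integral_eq_sub_of_hasDerivAt
      (f := fun x => u x * sin x) (fun x _ => (hud x).mul (Real.hasDerivAt_sin x))
      (((hv_c.mul Real.continuous_sin).add
        ((hu.continuous).mul Real.continuous_cos)).intervalIntegrable _ _)]
    simp [Real.sin_two_pi]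
  have hparts2 : (∫ x in (0:ℝ)..(2*π), (v x * cos x - u x * sin x)) = 0 := by
    rw [intervalIntegral.integral_eq_sub_of_hasDerivAt
      (f := fun x => u x * cos x) (f' := fun x => v x * cos x - u x * sin x) ?_
      (((hv_c.mul Real.continuous_cos).sub
        ((hu.continuous).mul Real.continuous_sin)).intervalIntegrable _ _)]
    · simp [Real.cos_two_pi, ← hu02]
    · intro x _
      have : HasDerivAt (fun y => u y * cos y) (v x * cos x + u x * -sin x) x :=
        (hud x).mul (Real.hasDerivAt_cos x)
      exact this.congr_deriv (by ring)
  have i1 : IntervalIntegrable (fun x => v x * sin x) volume 0 (2*π) :=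
    (hv_c.mul Real.continuous_sin).intervalIntegrable 0 (2*π)
  have i2 : IntervalIntegrable (fun x => u x * cos x) volume 0 (2*π) :=
    ((hu.continuous).mul Real.continuous_cos).intervalIntegrable 0 (2*π)
  have i3 : IntervalIntegrable (fun x => v x * cos x) volume 0 (2*π) :=
    (hv_c.mul Real.continuous_cos).intervalIntegrable 0 (2*π)
  have i4 : IntervalIntegrable (fun x => u x * sin x) volume 0 (2*π) :=
    ((hu.continuous).mul Real.continuous_sin).intervalIntegrable 0 (2*π)
  have hvsin : (∫ x in (0:ℝ)..(2*π), v x * sin x) = 0 := by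
    have hadd := intervalIntegral.integral_add i1 i2
    linarith [hparts1, hadd, hc]
  have hvcos : (∫ x in (0:ℝ)..(2*π), v x * cos x) = 0 := by
    have hsub := intervalIntegral.integral_sub i3 i4
    linarith [hparts2, hsub, hs]
  have hw_per : Function.Periodic w (2*π) := periodic_deriv v hv_per
  set c : ℤ → ℂ := fun n => fourierCoeff (liftIco (2*π) 0 (fun x => (v x : ℂ))) n with hcdef
  set d : ℤ → ℂ := fun n => fourierCoeff (liftIco (2*π) 0 (fun x => (w x : ℂ))) n with hddef
  have hdn : ∀ n, d n = Complex.I * n * c n := fun n => deriv_coeff v w hvd hw_c hv02 n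
  have hc0 : c 0 = 0 := by
    rw [hcdef]
    simp only
    rw [coeff_eq v hv_c 0]
    simp only [Int.cast_zero, zero_mul, Real.cos_zero, Real.sin_zero, mul_one, mul_zero,
      intervalIntegral.integral_zero, hintv]
    simp
  have hc1 : c 1 = 0 := by
    rw [hcdef]
    simp only
    rw [coeff_eq v hv_c 1]
    simp only [Int.cast_one, one_mul, hvcos, hvsin]
    simp
  have hcm1 : c (-1) = 0 := by
    rw [hcdef]
    simp only
    rw [coeff_eq v hv_c (-1)]
    simp only [Int.cast_neg, Int.cast_one, neg_mul, one_mul, Real.cos_neg, Real.sin_neg,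
      mul_neg, intervalIntegral.integral_neg, hvcos, hvsin]
    simp
  have hnorm : ∀ n : ℤ, ‖d n‖^2 = (n:ℝ)^2 * ‖c n‖^2 := by
    intro n
    rw [hdn n, norm_mul, norm_mul, Complex.norm_I, one_mul, mul_pow]
    congr 1
    rw [Complex.norm_intCast, sq_abs]
  obtain ⟨Sc, Ec⟩ := parseval_aux v hv_c hv_per
  obtain ⟨Sd, Ed⟩ := parseval_aux w hw_c hw_per
  have hterm : ∀ n : ℤ, 4 * ‖c n‖^2 ≤ ‖d n‖^2 := by
    intro n
    rw [hnorm n]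
    by_cases h : n = 0 ∨ n = 1 ∨ n = -1
    · rcases h with rfl | rfl | rfl <;> simp [hc0, hc1, hcm1]
    · push_neg at h
      obtain ⟨h0, h1, hm1⟩ := h
      have h3 : 2 ≤ n ∨ n ≤ -2 := by omega
      have h4 : (4:ℝ) ≤ (n:ℝ)^2 := by
        rcases h3 with h3 | h3
        · have : (2:ℝ) ≤ (n:ℝ) := by exact_mod_cast h3
          nlinarith
        · have : (n:ℝ) ≤ -2 := by exact_mod_cast h3
          nlinarith
      nlinarith [sq_nonneg (‖c n‖)]
  have hsum4 : Summable (fun n : ℤ => 4 * ‖c n‖^2) := Sc.mul_left 4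
  have hle := Summable.tsum_le_tsum hterm hsum4 Sd
  rw [tsum_mul_left, Ec, Ed] at hle
  have hπ : (0:ℝ) < 2*π := by positivity
  have := mul_le_mul_of_nonneg_left hle (le_of_lt hπ)
  have hne : (2*π) ≠ 0 := ne_of_gt hπ
  calc 4 * ∫ θ in (0:ℝ)..(2*π), (v θ)^2
      = (2*π) * (4 * ((2*π)⁻¹ * ∫ x in (0:ℝ)..(2*π), (v x)^2)) := by
        field_simp
      _ ≤ (2*π) * ((2*π)⁻¹ * ∫ x in (0:ℝ)..(2*π), (w x)^2) := this
      _ = ∫ θ in (0:ℝ)..(2*π), (w θ)^2 := by field_simp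

theorem stmt6 :
    (∀ k : ℕ, 2 ≤ k → 0 < (k:ℝ)^4 - (5/2) * (k:ℝ)^2 + 9/16) ∧
    ∃ C : ℝ, 0 < C ∧ ∀ u : ℝ → ℝ, ContDiff ℝ 2 u →
      Function.Periodic u (2 * Real.pi) →
      (∫ θ in (0:ℝ)..(2 * Real.pi), u θ * Real.cos θ) = 0 →
      (∫ θ in (0:ℝ)..(2 * Real.pi), u θ * Real.sin θ) = 0 →
      (∫ θ in (0:ℝ)..(2 * Real.pi),
          ((iteratedDeriv 2 u θ)^2 - (5/2) * (deriv u θ)^2 + (9/16) * (u θ)^2))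
        ≥ C * ∫ θ in (0:ℝ)..(2 * Real.pi), ((iteratedDeriv 2 u θ)^2 + (u θ)^2) := by
  constructor
  · intro k hk
    have hk' : (2:ℝ) ≤ (k:ℝ) := by exact_mod_cast hk
    have h4 : (4:ℝ) ≤ (k:ℝ)^2 := by nlinarith
    nlinarith [h4, sq_nonneg ((k:ℝ)^2 - 4)]
  · refine ⟨3/8, by norm_num, ?_⟩
    intro u hu hper hc hs
    have hit : iteratedDeriv 2 u = deriv (deriv u) := by
      rw [show (2:ℕ) = 1 + 1 from rfl, iteratedDeriv_succ, iteratedDeriv_one]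
    have hu' : ContDiff ℝ (1+1) u := by norm_num; exact hu
    have hu1 : ContDiff ℝ 1 (deriv u) := (contDiff_succ_iff_deriv.mp hu').2.2
    have hv_c : Continuous (deriv u) := hu1.continuous
    have hu1' : ContDiff ℝ (0+1) (deriv u) := by norm_num; exact hu1
    have hw_c : Continuous (deriv (deriv u)) := (contDiff_succ_iff_deriv.mp hu1').2.2.continuous
    set v := deriv u
    set w := deriv v
    set A := ∫ θ in (0:ℝ)..(2*π), (w θ)^2 with hA
    set P := ∫ θ in (0:ℝ)..(2*π), (v θ)^2 with hP
    set B := ∫ θ in (0:ℝ)..(2*π), (u θ)^2 with hB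
    have hkey : 4 * P ≤ A := key_ineq u hu hper hc hs
    have hBpos : 0 ≤ B := intervalIntegral.integral_nonneg (by positivity)
      (fun x _ => sq_nonneg _)
    have iA : IntervalIntegrable (fun θ => (w θ)^2) volume 0 (2*π) :=
      ((hw_c.pow 2)).intervalIntegrable 0 (2*π)
    have iP : IntervalIntegrable (fun θ => (5/2) * (v θ)^2) volume 0 (2*π) :=
      (continuous_const.mul (hv_c.pow 2)).intervalIntegrable 0 (2*π)
    have iB : IntervalIntegrable (fun θ => (9/16) * (u θ)^2) volume 0 (2*π) :=
      (continuous_const.mul ((hu.continuous).pow 2)).intervalIntegrable 0 (2*π)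
    have iB' : IntervalIntegrable (fun θ => (u θ)^2) volume 0 (2*π) :=
      ((hu.continuous).pow 2).intervalIntegrable 0 (2*π)
    have hsplit : (∫ θ in (0:ℝ)..(2*π),
        ((iteratedDeriv 2 u θ)^2 - (5/2) * (deriv u θ)^2 + (9/16) * (u θ)^2))
        = A - (5/2) * P + (9/16) * B := by
      simp_rw [hit]
      rw [intervalIntegral.integral_add (iA.sub iP) iB,
        intervalIntegral.integral_sub iA iP,
        intervalIntegral.integral_const_mul, intervalIntegral.integral_const_mul]
    have hsplit2 : (∫ θ in (0:ℝ)..(2*π), ((iteratedDeriv 2 u θ)^2 + (u θ)^2))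
        = A + B := by
      simp_rw [hit]
      rw [intervalIntegral.integral_add iA iB']
    rw [hsplit, hsplit2, ge_iff_le]
    linarith
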